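/- arXiv:1303.3631 — 2 statements merged into one kernel-verified Lean document; each statement's English description precedes it below -/
import Mathlib

section
/- Let (K, |·|) be a field with a non-archimedean absolute value. The function d on ℙ^n(K) defined by d([x₀:⋯:x_n], [y₀:⋯:y_n]) = (max_{i,j} |x_i y_j − x_j y_i|) / (max_i |x_i| · max_j |y_j|) satisfies the ultrametric triangle inequality: d(P, R) ≤ max(d(P, Q), d(Q, R)) for all P, Q, R ∈ ℙ^n(K). -/
/-- The chordal distance function on `ℙⁿ(K)`, computed on homogeneous coordinates:
`d([x],[y]) = max_{i,j} |xᵢyⱼ - xⱼyᵢ| / (maxᵢ |xᵢ| · maxⱼ |yⱼ|)`. -/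
noncomputable def chordalDist {K : Type*} [Field K] (v : AbsoluteValue K ℝ) (n : ℕ)
    (x y : Fin (n + 1) → K) : ℝ :=
  (Finset.univ.sup' Finset.univ_nonempty
      (fun ij : Fin (n + 1) × Fin (n + 1) => v (x ij.1 * y ij.2 - x ij.2 * y ij.1))) /
    ((Finset.univ.sup' Finset.univ_nonempty fun i => v (x i)) *
      (Finset.univ.sup' Finset.univ_nonempty fun j => v (y j)))

/-- For a non-archimedean absolute value, the chordal distance on `ℙⁿ(K)` satisfies the
ultrametric triangle inequality. -/
theorem stmt_5 {K : Type*} [Field K] (v : AbsoluteValue K ℝ)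
    (hna : ∀ x y : K, v (x + y) ≤ max (v x) (v y)) (n : ℕ)
    (x y z : Fin (n + 1) → K) (hx : x ≠ 0) (hy : y ≠ 0) (hz : z ≠ 0) :
    chordalDist v n x z ≤ max (chordalDist v n x y) (chordalDist v n y z) := by
  classical
  have hna' : ∀ a b : K, v (a - b) ≤ max (v a) (v b) := by
    intro a b
    simpa [sub_eq_add_neg] using hna a (-b)
  set A : ℝ := Finset.univ.sup' Finset.univ_nonempty (fun i => v (x i)) with hAdef
  set B : ℝ := Finset.univ.sup' Finset.univ_nonempty (fun i => v (y i)) with hBdef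
  set C : ℝ := Finset.univ.sup' Finset.univ_nonempty (fun i => v (z i)) with hCdef
  set Sxy : ℝ := Finset.univ.sup' Finset.univ_nonempty
      (fun ij : Fin (n + 1) × Fin (n + 1) => v (x ij.1 * y ij.2 - x ij.2 * y ij.1)) with hSxy
  set Syz : ℝ := Finset.univ.sup' Finset.univ_nonempty
      (fun ij : Fin (n + 1) × Fin (n + 1) => v (y ij.1 * z ij.2 - y ij.2 * z ij.1)) with hSyz
  set Sxz : ℝ := Finset.univ.sup' Finset.univ_nonempty
      (fun ij : Fin (n + 1) × Fin (n + 1) => v (x ij.1 * z ij.2 - x ij.2 * z ij.1)) with hSxz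
  -- positivity of A, B, C
  have hApos : 0 < A := by
    obtain ⟨i, hi⟩ := Function.ne_iff.mp hx
    exact lt_of_lt_of_le (v.pos hi) (Finset.le_sup' (fun i => v (x i)) (Finset.mem_univ i))
  have hBpos : 0 < B := by
    obtain ⟨i, hi⟩ := Function.ne_iff.mp hy
    exact lt_of_lt_of_le (v.pos hi) (Finset.le_sup' (fun i => v (y i)) (Finset.mem_univ i))
  have hCpos : 0 < C := by
    obtain ⟨i, hi⟩ := Function.ne_iff.mp hz
    exact lt_of_lt_of_le (v.pos hi) (Finset.le_sup' (fun i => v (z i)) (Finset.mem_univ i))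
  have hSxynn : 0 ≤ Sxy := le_trans (v.nonneg _)
    (Finset.le_sup' (fun ij : Fin (n + 1) × Fin (n + 1) => v (x ij.1 * y ij.2 - x ij.2 * y ij.1))
      (Finset.mem_univ ((0 : Fin (n+1)), (0 : Fin (n+1)))))
  have hSyznn : 0 ≤ Syz := le_trans (v.nonneg _)
    (Finset.le_sup' (fun ij : Fin (n + 1) × Fin (n + 1) => v (y ij.1 * z ij.2 - y ij.2 * z ij.1))
      (Finset.mem_univ ((0 : Fin (n+1)), (0 : Fin (n+1)))))
  -- choose k with v (y k) = B
  obtain ⟨k, -, hk⟩ := Finset.exists_mem_eq_sup' (Finset.univ_nonempty)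
    (fun i => v (y i))
  -- key bound for each pair (i, j)
  set M : ℝ := max (C * Sxy) (A * Syz) with hM
  have key : ∀ ij : Fin (n+1) × Fin (n+1),
      v (x ij.1 * z ij.2 - x ij.2 * z ij.1) * B ≤ M := by
    rintro ⟨i, j⟩
    have hid : y k * (x i * z j - x j * z i)
        = (z j * (x i * y k - x k * y i) - z i * (x j * y k - x k * y j))
          + x k * (y i * z j - y j * z i) := by ring
    have h1 : v (z j * (x i * y k - x k * y i)) ≤ C * Sxy := by
      rw [v.map_mul]
      exact mul_le_mul (Finset.le_sup' (fun i => v (z i)) (Finset.mem_univ j))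
        (Finset.le_sup' (fun ij : Fin (n + 1) × Fin (n + 1) =>
          v (x ij.1 * y ij.2 - x ij.2 * y ij.1)) (Finset.mem_univ (i, k)))
        (v.nonneg _) hCpos.le
    have h2 : v (z i * (x j * y k - x k * y j)) ≤ C * Sxy := by
      rw [v.map_mul]
      exact mul_le_mul (Finset.le_sup' (fun i => v (z i)) (Finset.mem_univ i))
        (Finset.le_sup' (fun ij : Fin (n + 1) × Fin (n + 1) =>
          v (x ij.1 * y ij.2 - x ij.2 * y ij.1)) (Finset.mem_univ (j, k)))
        (v.nonneg _) hCpos.le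
    have h3 : v (x k * (y i * z j - y j * z i)) ≤ A * Syz := by
      rw [v.map_mul]
      exact mul_le_mul (Finset.le_sup' (fun i => v (x i)) (Finset.mem_univ k))
        (Finset.le_sup' (fun ij : Fin (n + 1) × Fin (n + 1) =>
          v (y ij.1 * z ij.2 - y ij.2 * z ij.1)) (Finset.mem_univ (i, j)))
        (v.nonneg _) hApos.le
    calc v (x i * z j - x j * z i) * B
        = v (y k * (x i * z j - x j * z i)) := by rw [v.map_mul, hBdef, hk]; ring
      _ = v ((z j * (x i * y k - x k * y i) - z i * (x j * y k - x k * y j))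
            + x k * (y i * z j - y j * z i)) := by rw [hid]
      _ ≤ max (max (v (z j * (x i * y k - x k * y i)))
            (v (z i * (x j * y k - x k * y j)))) (v (x k * (y i * z j - y j * z i))) :=
          le_trans (hna _ _) (max_le_max (hna' _ _) le_rfl)
      _ ≤ M := by
          apply max_le (max_le _ _) _
          · exact le_trans h1 (le_max_left _ _)
          · exact le_trans h2 (le_max_left _ _)
          · exact le_trans h3 (le_max_right _ _)
  have hSB : Sxz * B ≤ M := by
    rw [← le_div_iff₀ hBpos]
    exact Finset.sup'_le _ _ (fun ij _ => (le_div_iff₀ hBpos).mpr (key ij))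
  -- finish by arithmetic
  have hchord : chordalDist v n x z = Sxz / (A * C) := rfl
  have hxy : chordalDist v n x y = Sxy / (A * B) := rfl
  have hyz : chordalDist v n y z = Syz / (B * C) := rfl
  rw [hchord, hxy, hyz]
  have step : Sxz / (A * C) ≤ M / (A * B * C) := by
    rw [div_le_div_iff₀ (by positivity) (by positivity)]
    nlinarith [mul_le_mul_of_nonneg_right hSB (le_of_lt (mul_pos hApos hCpos))]
  refine le_trans step ?_
  have e1 : C * Sxy / (A * B * C) = Sxy / (A * B) := by
    field_simp
  have e2 : A * Syz / (A * B * C) = Syz / (B * C) := by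
    field_simp
  rcases max_cases (C * Sxy) (A * Syz) with ⟨hmax, -⟩ | ⟨hmax, -⟩
  · rw [hM, hmax, e1]; exact le_max_left _ _
  · rw [hM, hmax, e2]; exact le_max_right _ _
end

section
/- Let a ∈ ℚ̄ be an algebraic number that is nonzero and not a root of unity. Then there exists a place v of the number field ℚ(a) (archimedean or non-archimedean) such that |a|_v > 1. -/
open NumberField IsDedekindDomain IsDedekindDomain.HeightOneSpectrum

/-- An element of a number field whose `v`-adic valuations are all at most `1` is an
algebraic integer. -/
lemma aux_exists_integer_of_valuation_le_one {K : Type*} [Field K] [NumberField K] (x : K)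
    (h : ∀ v : HeightOneSpectrum (RingOfIntegers K), v.valuation K x ≤ 1) :
    ∃ c : RingOfIntegers K, (c : K) = x := by
  classical
  obtain ⟨⟨r, s⟩, hx⟩ := IsLocalization.mk'_surjective (nonZeroDivisors (RingOfIntegers K)) x
  dsimp only at hx
  by_cases hr : r = 0
  · exact ⟨0, by simp [← hx, hr]⟩
  have hs0 : (s : RingOfIntegers K) ≠ 0 := nonZeroDivisors.coe_ne_zero s
  have key : ∀ v : HeightOneSpectrum (RingOfIntegers K),
      v.intValuation r ≤ v.intValuation (s : RingOfIntegers K) := by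
    intro v
    have h1 := h v
    rw [← hx, valuation_of_mk'] at h1
    have hspos : (0 : WithZero (Multiplicative ℤ)) < v.intValuation (s : RingOfIntegers K) :=
      zero_lt_iff.mpr (v.intValuation_ne_zero' s)
    exact (div_le_one₀ hspos).mp h1
  have hdvd : Ideal.span {(s : RingOfIntegers K)} ∣ Ideal.span {r} := by
    have hspanr : Ideal.span {r} ≠ (0 : Ideal (RingOfIntegers K)) := by
      simpa [Ideal.span_singleton_eq_bot] using hr
    have hspans : Ideal.span {(s : RingOfIntegers K)} ≠ (0 : Ideal (RingOfIntegers K)) := by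
      simpa [Ideal.span_singleton_eq_bot] using hs0
    rw [UniqueFactorizationMonoid.dvd_iff_normalizedFactors_le_normalizedFactors hspans hspanr, Multiset.le_iff_count]
    intro P
    by_cases hP : P ∈ UniqueFactorizationMonoid.normalizedFactors
        (Ideal.span {(s : RingOfIntegers K)})
    · have hPprime : Prime P := UniqueFactorizationMonoid.prime_of_normalized_factor P hP
      have hPbot : P ≠ ⊥ := hPprime.ne_zero
      haveI : P.IsPrime := Ideal.isPrime_of_prime hPprime
      set v : HeightOneSpectrum (RingOfIntegers K) := ⟨P, Ideal.isPrime_of_prime hPprime, hPbot⟩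
      have hcount : (Associates.mk v.asIdeal).count
            (Associates.mk (Ideal.span {(s : RingOfIntegers K)})).factors
          ≤ (Associates.mk v.asIdeal).count (Associates.mk (Ideal.span {r})).factors := by
        have := key v
        rw [intValuation_apply, intValuation_apply, v.intValuationDef_if_neg hr,
          v.intValuationDef_if_neg hs0] at this
        rw [WithZero.exp_le_exp, neg_le_neg_iff, Int.ofNat_le] at this
        exact this
      rw [← count_associates_factors_eq hspans ‹P.IsPrime› hPbot,
        ← count_associates_factors_eq hspanr ‹P.IsPrime› hPbot]
      exact hcount
    · simp [Multiset.count_eq_zero_of_notMem hP]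
  obtain ⟨c, hc⟩ := (Ideal.span_singleton_le_span_singleton).mp (Ideal.le_of_dvd hdvd)
  refine ⟨c, ?_⟩
  rw [← hx, hc, IsLocalization.mk'_mul_cancel_left]

/-- Kronecker-type statement: if `a` is a nonzero algebraic number which is not a root of
unity, then some place (archimedean or non-archimedean) of the number field `ℚ(a)` has
`|a|_v > 1`.  The number field `ℚ(a)` is represented as a number field `K` generated over
`ℚ` by `a`; its non-archimedean places are the height-one primes `v` of its ring of
integers, with `|a|_v > 1` expressed as `1 < v.valuation a`. -/
theorem stmt_9 {K : Type*} [Field K] [NumberField K] (a : K)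
    (hgen : IntermediateField.adjoin ℚ {a} = ⊤)
    (ha0 : a ≠ 0) (hroot : ∀ n : ℕ, 1 ≤ n → a ^ n ≠ 1) :
    (∃ w : NumberField.InfinitePlace K, 1 < w a) ∨
    (∃ v : IsDedekindDomain.HeightOneSpectrum (NumberField.RingOfIntegers K),
      1 < v.valuation K a) := by
  by_contra hcon
  push_neg at hcon
  obtain ⟨hinf, hfin⟩ := hcon
  obtain ⟨c, rfl⟩ := aux_exists_integer_of_valuation_le_one a hfin
  have hc0 : c ≠ 0 := fun h => ha0 (by simp [h])
  -- all infinite places are equal to 1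
  have hw1 : ∀ w : InfinitePlace K, w (c : K) = 1 := by
    intro w
    by_contra hne
    have hnorm : (1 : ℝ) ≤ |Algebra.norm ℚ ((c : K))| := by
      rw [← Algebra.coe_norm_int, ← Int.cast_one, ← Int.cast_abs, Rat.cast_intCast, Int.cast_le]
      exact Int.one_le_abs (Algebra.norm_ne_zero_iff.mpr hc0)
    rw [← InfinitePlace.prod_eq_abs_norm] at hnorm
    have hlt : ∏ w' : InfinitePlace K, w' (c : K) ^ w'.mult < 1 := by
      calc ∏ w' : InfinitePlace K, w' (c : K) ^ w'.mult
          < ∏ _w' : InfinitePlace K, (1 : ℝ) := by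
            refine Finset.prod_lt_prod (fun w' _ => ?_) (fun w' _ => ?_)
              ⟨w, Finset.mem_univ w, ?_⟩
            · exact pow_pos (InfinitePlace.pos_iff.mpr (by
                simpa using (RingOfIntegers.coe_eq_zero_iff (K := K)).not.mpr hc0)) _
            · exact pow_le_one₀ (apply_nonneg _ _) (hinf w')
            · exact pow_lt_one₀ (apply_nonneg _ _)
                (lt_of_le_of_ne (hinf w) hne) (InfinitePlace.mult_ne_zero)
        _ = 1 := Finset.prod_const_one
    exact absurd hnorm (not_le.mpr hlt)
  have hφ : ∀ φ : K →+* ℂ, ‖φ (c : K)‖ = 1 := by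
    intro φ
    have := hw1 (InfinitePlace.mk φ)
    rwa [InfinitePlace.apply] at this
  obtain ⟨n, hn, hpow⟩ :=
    NumberField.Embeddings.pow_eq_one_of_norm_eq_one K ℂ (RingOfIntegers.isIntegral_coe c) hφ
  exact hroot n hn hpow
end
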